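/- Let n, l be positive integers, λ : Fin n → Fin l → ℂ with Λ := max_{i,j} |λ_{i,j}| > 0, let γ > 0, let ω : ℕ → ℝ be a sequence of positive numbers, and let k₀ ≤ ν be natural numbers. For each k with k₀ ≤ k ≤ ν let a_k : K → ℂˡ be a map on a set K ⊆ ℂᵖ, and let χ : K → ℂˡ satisfy: for all k with k₀ < k ≤ ν, all b ∈ K and all j, |χ_j(b) − a_{k,j}(b)| ≤ γ ω_{k+1} / (l Λ (2^{k+1}+1)). Define recursively K_{k₀} := K and, for k₀ < k ≤ ν, K_k := { b ∈ K_{k−1} : for every weight α ∈ W'_k, |Σ_{j=1}^l a_{k,j}(b) α_j| ≥ γ ω_{k+1} }, and define H_k(χ) := { b ∈ K : for every α ∈ W'_k, |Σ_{j=1}^l χ_j(b) α_j| ≥ 2 γ ω_{k+1} }. Then ⋂_{k=k₀+1}^{ν} H_k(χ) ⊆ K_ν. -/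

import Mathlib

/-- The weight vector `α(Q,s) ∈ ℂˡ` with `α(Q,s)_j = Σ_i Q_i λ_{i,j} − λ_{s,j}`. -/
noncomputable def weightVec15 (n l : ℕ) (lam : Fin n → Fin l → ℂ) (Q : Fin n →₀ ℕ) (s : Fin n) :
    Fin l → ℂ :=
  fun j => (∑ i, (Q i : ℂ) * lam i j) - lam s j

/-- `W'_k`: the set of nonzero weight vectors `α(Q,s)` with `2^k + 1 ≤ |Q| ≤ 2^{k+1}`. -/
def weightSet15 (n l : ℕ) (lam : Fin n → Fin l → ℂ) (k : ℕ) : Set (Fin l → ℂ) :=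
  {α | α ≠ 0 ∧ ∃ Q : Fin n →₀ ℕ, ∃ s : Fin n, α = weightVec15 n l lam Q s ∧
    2 ^ k + 1 ≤ ∑ t, Q t ∧ ∑ t, Q t ≤ 2 ^ (k + 1)}

/-- If `χ` is uniformly close to each frequency map `a_k` on `K`, then every point of `K`
satisfying the strengthened diophantine conditions `H_k(χ)` for `k₀ < k ≤ ν` belongs to
the recursively defined set `K_ν`. -/
theorem stmt_15 (n l p : ℕ) (hn : 0 < n) (hl : 0 < l)
    (lam : Fin n → Fin l → ℂ) (Λ : ℝ)
    (hΛ : IsGreatest {x : ℝ | ∃ i j, x = ‖lam i j‖} Λ) (hΛpos : 0 < Λ)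
    (γ : ℝ) (hγ : 0 < γ) (ω : ℕ → ℝ) (hω : ∀ k, 0 < ω k)
    (k₀ ν : ℕ) (hk₀ν : k₀ ≤ ν)
    (K : Set (Fin p → ℂ)) (a : ℕ → (Fin p → ℂ) → Fin l → ℂ)
    (χ : (Fin p → ℂ) → Fin l → ℂ)
    (hclose : ∀ k, k₀ < k → k ≤ ν → ∀ b ∈ K, ∀ j,
      ‖χ b j - a k b j‖ ≤ γ * ω (k + 1) / ((l : ℝ) * Λ * (2 ^ (k + 1) + 1)))
    (Ks : ℕ → Set (Fin p → ℂ)) (hKs0 : Ks k₀ = K)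
    (hKs : ∀ k, k₀ < k → k ≤ ν → Ks k = {b ∈ Ks (k - 1) |
      ∀ α ∈ weightSet15 n l lam k, γ * ω (k + 1) ≤ ‖∑ j, a k b j * α j‖}) :
    ∀ b ∈ K,
      (∀ k, k₀ < k → k ≤ ν →
        b ∈ {b ∈ K | ∀ α ∈ weightSet15 n l lam k,
          2 * γ * ω (k + 1) ≤ ‖∑ j, χ b j * α j‖}) →
      b ∈ Ks ν := by

  intro b hbK hH
  suffices h : ∀ m, k₀ ≤ m → m ≤ ν → b ∈ Ks m from h ν hk₀ν le_rfl
  intro m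
  induction m with
  | zero =>
    intro h1 _
    have : k₀ = 0 := Nat.le_zero.mp h1
    rw [← this, hKs0]; exact hbK
  | succ m ih =>
    intro h1 h2
    rcases eq_or_lt_of_le h1 with heq | hlt
    · rw [← heq, hKs0]; exact hbK
    · rw [hKs (m + 1) hlt h2]
      refine ⟨?_, ?_⟩
      · simpa using ih (Nat.lt_succ_iff.mp hlt) (le_trans (Nat.le_succ m) h2)
      · intro α hα
        set k := m + 1 with hk
        obtain ⟨hα0, Q, s, hαeq, hQ1, hQ2⟩ := hα
        have hH' := (hH k hlt h2).2 α ⟨hα0, Q, s, hαeq, hQ1, hQ2⟩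
        have hclose' := fun j => hclose k hlt h2 b hbK j
        have hl' : (0:ℝ) < (l : ℝ) := by exact_mod_cast hl
        have hlam : ∀ i j, ‖lam i j‖ ≤ Λ := fun i j => hΛ.2 ⟨i, j, rfl⟩
        have hbound : ∀ j, ‖α j‖ ≤ Λ * (2 ^ (k + 1) + 1) := by
          intro j
          rw [hαeq]
          unfold weightVec15
          calc ‖(∑ i, (Q i : ℂ) * lam i j) - lam s j‖
              ≤ ‖∑ i, (Q i : ℂ) * lam i j‖ + ‖lam s j‖ := norm_sub_le _ _
            _ ≤ (∑ i, (Q i : ℝ) * ‖lam i j‖) + Λ := by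
                gcongr
                · refine le_trans (norm_sum_le _ _) ?_
                  apply Finset.sum_le_sum
                  intro i _
                  rw [norm_mul]
                  simp
                · exact hlam s j
            _ ≤ (∑ i, (Q i : ℝ) * Λ) + Λ := by
                refine add_le_add_left (Finset.sum_le_sum fun i _ => ?_) Λ
                exact mul_le_mul_of_nonneg_left (hlam i j) (Nat.cast_nonneg _)
            _ = ((∑ i, (Q i : ℝ)) + 1) * Λ := by rw [← Finset.sum_mul]; ring
            _ ≤ ((2 ^ (k + 1) : ℝ) + 1) * Λ := by
                gcongr
                have : ((∑ t, Q t : ℕ) : ℝ) ≤ ((2 ^ (k + 1) : ℕ) : ℝ) := by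
                  exact_mod_cast hQ2
                simpa using this
            _ = Λ * (2 ^ (k + 1) + 1) := by ring
        have hdiff : ‖(∑ j, χ b j * α j) - ∑ j, a k b j * α j‖ ≤ γ * ω (k + 1) := by
          rw [← Finset.sum_sub_distrib]
          have h1 : ∀ j : Fin l, ‖χ b j * α j - a k b j * α j‖
              ≤ γ * ω (k + 1) / (l : ℝ) := by
            intro j
            have he : χ b j * α j - a k b j * α j = (χ b j - a k b j) * α j := by ring
            rw [he, norm_mul]
            calc ‖χ b j - a k b j‖ * ‖α j‖
                ≤ (γ * ω (k + 1) / ((l : ℝ) * Λ * (2 ^ (k + 1) + 1))) *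
                    (Λ * (2 ^ (k + 1) + 1)) := by
                  have h2' : (0:ℝ) < 2 ^ (k + 1) + 1 := by positivity
                  gcongr
                  · exact div_nonneg (mul_nonneg hγ.le (hω (k + 1)).le) (by positivity)
                  · exact hclose' j
                  · exact hbound j
              _ = γ * ω (k + 1) / (l : ℝ) := by
                  field_simp
          calc ‖∑ j, (χ b j * α j - a k b j * α j)‖
              ≤ ∑ j : Fin l, ‖χ b j * α j - a k b j * α j‖ := norm_sum_le _ _
            _ ≤ ∑ _j : Fin l, γ * ω (k + 1) / (l : ℝ) :=
                Finset.sum_le_sum fun j _ => h1 j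
            _ = γ * ω (k + 1) := by
                rw [Finset.sum_const]
                rw [Finset.card_univ, Fintype.card_fin, nsmul_eq_mul]
                field_simp
        have htri := norm_sub_norm_le (∑ j, χ b j * α j) (∑ j, a k b j * α j)
        linarith
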